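/- Let Ω be the category whose objects are the finite sets ⟨s⟩ = {1,…,s} for s > 0 and whose morphisms are surjective functions. For a fixed pointed set S with a chosen linear order on S∖{*}, and a fixed commutative ring R, define the functor M : Ωᵒᵖ → Mod R by M(⟨s⟩) = the free R-module on the s-fold smash power S^∧s (reduced: basis the non-basepoint elements), with a surjection h : ⟨t⟩ → ⟨s⟩ acting by (x₁,…,x_s) ↦ (x_{h(1)},…,x_{h(t)}) extended linearly. Then M is a projective object of the abelian category of functors Ωᵒᵖ → Mod R. -/

import Mathlib

structure OmegaFunctor (R : Type) [CommRing R] where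
  obj : ℕ → Type
  [acg : ∀ s, AddCommGroup (obj s)]
  [mod : ∀ s, Module R (obj s)]
  map : ∀ {s t : ℕ} (h : Fin (t + 1) → Fin (s + 1)),
    Function.Surjective h → (obj s →ₗ[R] obj t)
  map_id : ∀ s : ℕ, map (s := s) id Function.surjective_id = LinearMap.id
  map_comp : ∀ {s t u : ℕ} (h : Fin (t + 1) → Fin (s + 1)) (hh : Function.Surjective h)
    (k : Fin (u + 1) → Fin (t + 1)) (hk : Function.Surjective k),
    map (h ∘ k) (hh.comp hk) = (map k hk).comp (map h hh)

attribute [instance] OmegaFunctor.acg OmegaFunctor.mod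

/-- Natural transformations F → G, as a submodule of the product of the Hom modules. -/
def OmegaFunctor.Nat {R : Type} [CommRing R] (F G : OmegaFunctor R) :
    Submodule R (∀ s : ℕ, F.obj s →ₗ[R] G.obj s) where
  carrier := {T | ∀ {s t : ℕ} (h : Fin (t + 1) → Fin (s + 1)) (hs : Function.Surjective h),
    (G.map h hs).comp (T s) = (T t).comp (F.map h hs)}
  add_mem' := by
    intro a b ha hb s t h hs
    simp only [Pi.add_apply, LinearMap.comp_add, LinearMap.add_comp, ha h hs, hb h hs]
  zero_mem' := by
    intro s t h hs
    simp
  smul_mem' := by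
    intro c a ha s t h hs
    simp only [Pi.smul_apply, LinearMap.comp_smul, LinearMap.smul_comp, ha h hs]

noncomputable def Mfun (R : Type) [CommRing R] (S : Type) (pt : S) : OmegaFunctor R where
  obj s := (Fin (s + 1) → {x : S // x ≠ pt}) →₀ R
  map h _ := Finsupp.lmapDomain R R (fun x => x ∘ h)
  map_id s := by
    exact Finsupp.lmapDomain_id R R
  map_comp h hh k hk := by
    exact Finsupp.lmapDomain_comp R R (fun x => x ∘ h) (fun x => x ∘ k)

namespace MProjAux

variable {S : Type} {pt : S} [LinearOrder {x : S // x ≠ pt}]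

abbrev A (S : Type) (pt : S) := {x : S // x ≠ pt}

variable {s t u : ℕ}

def img (x : Fin (t + 1) → A S pt) : Finset (A S pt) := Finset.image x Finset.univ

lemma img_card (x : Fin (t + 1) → A S pt) : (img x).card = (img x).card - 1 + 1 := by
  have : (img x).Nonempty := ⟨x 0, Finset.mem_image_of_mem x (Finset.mem_univ 0)⟩
  have := Finset.card_pos.mpr this
  omega

lemma mem_img (x : Fin (t + 1) → A S pt) (i : Fin (t + 1)) : x i ∈ img x :=
  Finset.mem_image_of_mem x (Finset.mem_univ i)

def bar' (s : Finset (A S pt)) (hs : s.card = s.card - 1 + 1) : Fin (s.card - 1 + 1) → A S pt :=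
  fun i => (s.orderIsoOfFin hs i : A S pt)

def idx' (x : Fin (t + 1) → A S pt) (s : Finset (A S pt)) (hs : s.card = s.card - 1 + 1)
    (hmem : ∀ i, x i ∈ s) : Fin (t + 1) → Fin (s.card - 1 + 1) :=
  fun i => (s.orderIsoOfFin hs).symm ⟨x i, hmem i⟩

lemma idx'_surj (x : Fin (t + 1) → A S pt) (s : Finset (A S pt)) (hs : s.card = s.card - 1 + 1)
    (hmem : ∀ i, x i ∈ s) (himg : img x = s) : Function.Surjective (idx' x s hs hmem) := by
  intro j
  have hj : (s.orderIsoOfFin hs j : A S pt) ∈ img x := by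
    rw [himg]; exact (s.orderIsoOfFin hs j).2
  obtain ⟨i, _, hi⟩ := Finset.mem_image.mp hj
  refine ⟨i, ?_⟩
  have : (⟨x i, hmem i⟩ : {a // a ∈ s}) = s.orderIsoOfFin hs j := Subtype.ext hi
  simp [idx', this]

lemma bar'_comp_idx' (x : Fin (t + 1) → A S pt) (s : Finset (A S pt))
    (hs : s.card = s.card - 1 + 1) (hmem : ∀ i, x i ∈ s) (i : Fin (t + 1)) :
    bar' s hs (idx' x s hs hmem i) = x i := by
  simp [bar', idx']

lemma img_comp (x : Fin (t + 1) → A S pt) (h : Fin (u + 1) → Fin (t + 1))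
    (hh : Function.Surjective h) : img (x ∘ h) = img x := by
  unfold img
  rw [← Finset.image_image, Finset.image_univ_of_surjective hh]

variable {R : Type} [CommRing R] (F G : OmegaFunctor R)
variable (T : (F.Nat G)) (hT : ∀ s, Function.Surjective (T.1 s)) (U : ((Mfun R S pt).Nat G))

noncomputable def pick (r : ℕ) (y : Fin (r + 1) → A S pt) : F.obj r :=
  (hT r (U.1 r (Finsupp.single y 1))).choose

omit [LinearOrder {x : S // x ≠ pt}] in
lemma pick_spec (r : ℕ) (y : Fin (r + 1) → A S pt) :
    T.1 r (pick F G T hT U r y) = U.1 r (Finsupp.single y 1) :=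
  (hT r (U.1 r (Finsupp.single y 1))).choose_spec

noncomputable def gpar (s : Finset (A S pt)) (hs : s.card = s.card - 1 + 1)
    (x : Fin (t + 1) → A S pt) (hmem : ∀ i, x i ∈ s)
    (hsurj : Function.Surjective (idx' x s hs hmem)) : F.obj t :=
  F.map (idx' x s hs hmem) hsurj (pick F G T hT U (s.card - 1) (bar' s hs))

lemma gpar_eq {s₁ s₂ : Finset (A S pt)} (e : s₁ = s₂) (hs₁ : s₁.card = s₁.card - 1 + 1)
    (hs₂ : s₂.card = s₂.card - 1 + 1)
    (x : Fin (t + 1) → A S pt) (hmem₁ : ∀ i, x i ∈ s₁) (hmem₂ : ∀ i, x i ∈ s₂)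
    (hsurj₁ : Function.Surjective (idx' x s₁ hs₁ hmem₁))
    (hsurj₂ : Function.Surjective (idx' x s₂ hs₂ hmem₂)) :
    gpar F G T hT U s₁ hs₁ x hmem₁ hsurj₁ = gpar F G T hT U s₂ hs₂ x hmem₂ hsurj₂ := by
  subst e; rfl

noncomputable def gfun (t : ℕ) (x : Fin (t + 1) → A S pt) : F.obj t :=
  gpar F G T hT U (img x) (img_card x) x (mem_img x) (idx'_surj x _ _ _ rfl)

lemma gfun_comp (x : Fin (t + 1) → A S pt) (h : Fin (u + 1) → Fin (t + 1))
    (hh : Function.Surjective h) :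
    gfun F G T hT U u (x ∘ h) = F.map h hh (gfun F G T hT U t x) := by
  have e : img (x ∘ h) = img x := img_comp x h hh
  have hs : (img x).card = (img x).card - 1 + 1 := img_card x
  have hmem : ∀ i, (x ∘ h) i ∈ img x := fun i => mem_img x (h i)
  have hsurj : Function.Surjective (idx' (x ∘ h) (img x) hs hmem) :=
    idx'_surj (x ∘ h) (img x) hs hmem e
  have step1 : gfun F G T hT U u (x ∘ h) = gpar F G T hT U (img x) hs (x ∘ h) hmem hsurj :=
    gpar_eq F G T hT U e _ _ _ _ _ _ _
  rw [step1]
  show F.map ((idx' x (img x) hs (mem_img x)) ∘ h)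
      ((idx'_surj x (img x) hs (mem_img x) rfl).comp hh)
      (pick F G T hT U ((img x).card - 1) (bar' (img x) hs)) = _
  rw [F.map_comp (idx' x (img x) hs (mem_img x)) (idx'_surj x (img x) hs (mem_img x) rfl) h hh]
  rfl

lemma bar_comp_idx (x : Fin (t + 1) → A S pt) :
    (bar' (img x) (img_card x)) ∘ (idx' x (img x) (img_card x) (mem_img x)) = x :=
  funext fun i => bar'_comp_idx' x _ _ _ i

end MProjAux

open MProjAux in
theorem M_projective (R : Type) [CommRing R] (S : Type) (pt : S)
    [LinearOrder {x : S // x ≠ pt}]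
    (F G : OmegaFunctor R) (T : (F.Nat G)) (hT : ∀ s, Function.Surjective (T.1 s))
    (U : ((Mfun R S pt).Nat G)) :
    ∃ V : ((Mfun R S pt).Nat F), ∀ s, (T.1 s).comp (V.1 s) = U.1 s := by
  have hVnat : (fun t => (Finsupp.lift (F.obj t) R (Fin (t + 1) → A S pt)) (gfun F G T hT U t)) ∈
      (Mfun R S pt).Nat F := by
    intro s t h hs
    apply Finsupp.lhom_ext
    intro x b
    show F.map h hs ((Finsupp.lift (F.obj s) R (Fin (s + 1) → A S pt)) (gfun F G T hT U s)
        (Finsupp.single x b)) =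
      (Finsupp.lift (F.obj t) R (Fin (t + 1) → A S pt)) (gfun F G T hT U t)
        (Finsupp.mapDomain (fun y => y ∘ h) (Finsupp.single x b))
    rw [Finsupp.mapDomain_single]
    simp only [Finsupp.lift_apply, Finsupp.sum_single_index, zero_smul, map_smul]
    rw [gfun_comp F G T hT U x h hs]
  refine ⟨⟨_, hVnat⟩, ?_⟩
  intro s
  apply Finsupp.lhom_ext
  intro x b
  simp only [LinearMap.comp_apply, Finsupp.lift_apply, Finsupp.sum_single_index, zero_smul,
    map_smul]
  have key : T.1 s (gfun F G T hT U s x) = U.1 s (Finsupp.single x 1) := by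
    unfold gfun gpar
    have hTnat := T.2 (idx' x (img x) (img_card x) (mem_img x)) (idx'_surj x _ _ _ rfl)
    have := LinearMap.congr_fun hTnat
      (pick F G T hT U ((img x).card - 1) (bar' (img x) (img_card x)))
    simp only [LinearMap.comp_apply] at this
    rw [← this, pick_spec]
    have hUnat := U.2 (idx' x (img x) (img_card x) (mem_img x)) (idx'_surj x _ _ _ rfl)
    have h2 := LinearMap.congr_fun hUnat
      (Finsupp.single (bar' (img x) (img_card x)) (1 : R))
    change G.map _ _ (U.1 _ _) = U.1 s ((Mfun R S pt).map _ _ _) at h2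
    rw [h2]
    have hMap : (Mfun R S pt).map (idx' x (img x) (img_card x) (mem_img x))
        (idx'_surj x _ _ _ rfl) (Finsupp.single (bar' (img x) (img_card x)) (1 : R)) =
        Finsupp.single x 1 := by
      show Finsupp.lmapDomain R R _ _ = _
      simp only [Finsupp.lmapDomain, LinearMap.coe_mk, AddHom.coe_mk, Finsupp.mapDomain_single]
      rw [bar_comp_idx]
    rw [hMap]
  change T.1 s ((Finsupp.lift (F.obj s) R (Fin (s + 1) → A S pt)) (gfun F G T hT U s)
    (Finsupp.single x b)) = _
  simp only [Finsupp.lift_apply, Finsupp.sum_single_index, zero_smul, map_smul]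
  rw [key, ← LinearMap.map_smul (U.1 s) b (Finsupp.single x 1 : (Mfun R S pt).obj s)]
  refine congrArg _ ?_
  exact Finsupp.smul_single_one x b
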